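/- Let 0 ≤ α < 1/2 and let G be a (simple) graph on s vertices with at least (1−α)·\binom{s}{2} edges. Then G has a connected component with at least (1−α)·s vertices. -/

import Mathlib

/-- Any graph on `s` vertices with at least `(1-α)·C(s,2)` edges (`0 ≤ α < 1/2`)
has a connected component with at least `(1-α)·s` vertices. -/
theorem large_component_of_dense {V : Type*} [Fintype V] [Nonempty V] [DecidableEq V]
    (G : SimpleGraph V) [DecidableRel G.Adj]
    (s : ℕ) (hs : Fintype.card V = s)
    (α : ℝ) (hα0 : 0 ≤ α) (hα : α < 1 / 2)
    (hedges : (1 - α) * (s.choose 2 : ℝ) ≤ (G.edgeFinset.card : ℝ)) :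
    ∃ c : G.ConnectedComponent, (1 - α) * s ≤ (Nat.card c.supp : ℝ) := by
  classical
  by_contra hcon
  push_neg at hcon
  have hs1 : 1 ≤ s := by
    rw [← hs]; exact Fintype.card_pos
  -- degree bound via component size
  have hdeg : ∀ v : V,
      (G.degree v : ℝ) ≤ (Nat.card (G.connectedComponentMk v).supp : ℝ) - 1 := by
    intro v
    have hsub : insert v (G.neighborFinset v) ⊆
        (G.connectedComponentMk v).supp.toFinset := by
      intro w hw
      simp only [Finset.mem_insert, SimpleGraph.mem_neighborFinset] at hw
      rw [Set.mem_toFinset, SimpleGraph.ConnectedComponent.mem_supp_iff]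
      rcases hw with rfl | hw
      · rfl
      · exact SimpleGraph.ConnectedComponent.sound hw.symm.reachable
    have hcard : G.degree v + 1 ≤ Nat.card (G.connectedComponentMk v).supp := by
      have h1 := Finset.card_le_card hsub
      rw [Finset.card_insert_of_notMem (by simp)] at h1
      rw [Nat.card_coe_set_eq, Set.ncard_eq_toFinset_card']
      convert h1 using 2
      exact (G.card_neighborFinset_eq_degree v).symm
    have h2 := (Nat.cast_le (α := ℝ)).2 hcard
    push_cast at h2
    linarith
  have hstrict : ∀ v : V, (G.degree v : ℝ) < (1 - α) * s - 1 := fun v =>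
    lt_of_le_of_lt (hdeg v) (by linarith [hcon (G.connectedComponentMk v)])
  have hsum : ∑ v : V, (G.degree v : ℝ) < ∑ _v : V, ((1 - α) * s - 1) :=
    Finset.sum_lt_sum_of_nonempty Finset.univ_nonempty (fun v _ => hstrict v)
  have hhand : ∑ v : V, G.degree v = 2 * G.edgeFinset.card :=
    SimpleGraph.sum_degrees_eq_twice_card_edges G
  have h2E : (∑ v : V, (G.degree v : ℝ)) = 2 * G.edgeFinset.card := by
    exact_mod_cast congrArg (Nat.cast (R := ℝ)) hhand
  have hsum' : (2 * G.edgeFinset.card : ℝ) < s * ((1 - α) * s - 1) := by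
    rw [← h2E]
    calc ∑ v : V, (G.degree v : ℝ) < ∑ _v : V, ((1 - α) * s - 1) := hsum
      _ = s * ((1 - α) * s - 1) := by
          rw [Finset.sum_const, Finset.card_univ, hs, nsmul_eq_mul]
  have hch : (s.choose 2 : ℝ) = s * (s - 1) / 2 := by rw [Nat.cast_choose_two]
  rw [hch] at hedges
  have hS1 : (1 : ℝ) ≤ s := by exact_mod_cast hs1
  nlinarith [hedges, hsum', hS1, hα0]
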